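/- Fix μ ∈ (−1,1) with μ ≠ 0, let E ∈ (ℂ³)^{⊗3} be the q-deformed determinant vector, let P = μ^{-2}(1+μ²)^{-1}(E* ⊗ 1 ⊗ 1)(1 ⊗ 1 ⊗ E) on ℂ³ ⊗ ℂ³, and let L = ‖E‖^{-2}·EE* be the orthogonal projection of (ℂ³)^{⊗3} onto the span of E, where ‖E‖² = (1+μ²)(1+μ²+μ⁴). Then, as operators on (ℂ³)^{⊗3}: (1 ⊗ P)(P ⊗ 1)(1 ⊗ P) = (μ + μ^{-1})^{-2}·((1 ⊗ P) − L) + L. -/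

import Mathlib

open Matrix

/-- The q-deformed determinant vector
`E = e₁₂₃ − μe₁₃₂ − μe₂₁₃ + μ²e₂₃₁ + μ²e₃₁₂ − μ³e₃₂₁ ∈ (ℂ³)^{⊗3}`, in the identification
of `(ℂ³)^{⊗3}` with functions `(Fin 3)³ → ℂ` (with the standard basis indexed from `0`). -/
noncomputable def Ev (μ : ℝ) : Fin 3 × Fin 3 × Fin 3 → ℂ := fun x =>
  if x = (0, 1, 2) then 1
  else if x = (0, 2, 1) then -(μ : ℂ)
  else if x = (1, 0, 2) then -(μ : ℂ)
  else if x = (1, 2, 0) then (μ : ℂ) ^ 2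
  else if x = (2, 0, 1) then (μ : ℂ) ^ 2
  else if x = (2, 1, 0) then -(μ : ℂ) ^ 3
  else 0

/-- The matrix of `1 ⊗ 1 ⊗ E : ℂ³ ⊗ ℂ³ → (ℂ³)^{⊗5}`. -/
noncomputable def oneOneE3 (μ : ℝ) :
    Matrix (Fin 3 × Fin 3 × Fin 3 × Fin 3 × Fin 3) (Fin 3 × Fin 3) ℂ :=
  Matrix.of fun x p =>
    if x.1 = p.1 ∧ x.2.1 = p.2 then Ev μ (x.2.2.1, x.2.2.2.1, x.2.2.2.2) else 0

/-- The matrix of `E* ⊗ 1 ⊗ 1 : (ℂ³)^{⊗5} → ℂ³ ⊗ ℂ³`. -/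
noncomputable def estarOneOne3 (μ : ℝ) :
    Matrix (Fin 3 × Fin 3) (Fin 3 × Fin 3 × Fin 3 × Fin 3 × Fin 3) ℂ :=
  Matrix.of fun p x =>
    if p.1 = x.2.2.2.1 ∧ p.2 = x.2.2.2.2 then star (Ev μ (x.1, x.2.1, x.2.2.1)) else 0

/-- The matrix of `E ⊗ 1 ⊗ 1 : ℂ³ ⊗ ℂ³ → (ℂ³)^{⊗5}`. -/
noncomputable def eOneOne3 (μ : ℝ) :
    Matrix (Fin 3 × Fin 3 × Fin 3 × Fin 3 × Fin 3) (Fin 3 × Fin 3) ℂ :=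
  Matrix.of fun x p =>
    if x.2.2.2.1 = p.1 ∧ x.2.2.2.2 = p.2 then Ev μ (x.1, x.2.1, x.2.2.1) else 0

/-- The matrix of `1 ⊗ 1 ⊗ E* : (ℂ³)^{⊗5} → ℂ³ ⊗ ℂ³`. -/
noncomputable def oneOneEstar3 (μ : ℝ) :
    Matrix (Fin 3 × Fin 3) (Fin 3 × Fin 3 × Fin 3 × Fin 3 × Fin 3) ℂ :=
  Matrix.of fun p x =>
    if p.1 = x.1 ∧ p.2 = x.2.1 then star (Ev μ (x.2.2.1, x.2.2.2.1, x.2.2.2.2)) else 0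

/-- The operator `P = μ⁻²(1+μ²)⁻¹ (E* ⊗ 1 ⊗ 1)(1 ⊗ 1 ⊗ E)` on `ℂ³ ⊗ ℂ³`. -/
noncomputable def Pmat3 (μ : ℝ) : Matrix (Fin 3 × Fin 3) (Fin 3 × Fin 3) ℂ :=
  (((μ : ℂ) ^ 2)⁻¹ * (1 + (μ : ℂ) ^ 2)⁻¹) • (estarOneOne3 μ * oneOneE3 μ)

/-- The matrix of `1 ⊗ P : (ℂ³)^{⊗3} → (ℂ³)^{⊗3}`. -/
noncomputable def onePmat3 (μ : ℝ) : Matrix (Fin 3 × Fin 3 × Fin 3) (Fin 3 × Fin 3 × Fin 3) ℂ :=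
  Matrix.of fun x y => if x.1 = y.1 then Pmat3 μ x.2 y.2 else 0

/-- The matrix of `P ⊗ 1 : (ℂ³)^{⊗3} → (ℂ³)^{⊗3}`. -/
noncomputable def pOneMat3 (μ : ℝ) : Matrix (Fin 3 × Fin 3 × Fin 3) (Fin 3 × Fin 3 × Fin 3) ℂ :=
  Matrix.of fun x y => if x.2.2 = y.2.2 then Pmat3 μ (x.1, x.2.1) (y.1, y.2.1) else 0

/-- The orthogonal projection `L = ‖E‖⁻² EE*` of `(ℂ³)^{⊗3}` onto the span of `E`, where
`‖E‖² = (1+μ²)(1+μ²+μ⁴)`. -/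
noncomputable def Lmat3 (μ : ℝ) : Matrix (Fin 3 × Fin 3 × Fin 3) (Fin 3 × Fin 3 × Fin 3) ℂ :=
  (((1 + (μ : ℂ) ^ 2) * (1 + (μ : ℂ) ^ 2 + (μ : ℂ) ^ 4))⁻¹) •
    Matrix.vecMulVec (Ev μ) (star (Ev μ))

lemma fin3_cases (i : Fin 3) : i = 0 ∨ i = 1 ∨ i = 2 := by omega

lemma mulPE (μ : ℝ) (p q : Fin 3 × Fin 3) : (estarOneOne3 μ * oneOneE3 μ) p q
    = ∑ k : Fin 3, star (Ev μ (q.1, q.2, k)) * Ev μ (k, p.1, p.2) := by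
  simp [Matrix.mul_apply, estarOneOne3, oneOneE3, Fintype.sum_prod_type, ite_and,
    Finset.sum_ite_eq, Finset.sum_ite_eq']

noncomputable def wv (μ : ℝ) : Fin 3 × Fin 3 → ℂ := fun p =>
  if p.1 = p.2 then 0 else if p.1 < p.2 then 1 else -(μ : ℂ)

noncomputable def Nf (μ : ℝ) (p q : Fin 3 × Fin 3) : ℂ :=
  if p.1 + p.2 = q.1 + q.2 then wv μ p * wv μ q else 0

set_option maxHeartbeats 1000000 in
lemma Pmat3_eq (μ : ℝ) (hμ0 : μ ≠ 0) : Pmat3 μ = Matrix.of fun p q =>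
    (1 + (μ : ℂ) ^ 2)⁻¹ * Nf μ p q := by
  have hc : (μ : ℂ) ≠ 0 := by exact_mod_cast hμ0
  have h2 : (1 : ℂ) + (μ : ℂ) ^ 2 ≠ 0 := by
    have : ((1 + μ ^ 2 : ℝ) : ℂ) ≠ 0 := by
      exact_mod_cast (by positivity : (1 + μ ^ 2 : ℝ) ≠ 0)
    push_cast at this; exact this
  ext ⟨p1, p2⟩ ⟨q1, q2⟩
  rw [Pmat3, Matrix.smul_apply, mulPE]
  rcases fin3_cases p1 with rfl|rfl|rfl <;> rcases fin3_cases p2 with rfl|rfl|rfl <;>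
  rcases fin3_cases q1 with rfl|rfl|rfl <;> rcases fin3_cases q2 with rfl|rfl|rfl <;>
  · simp [Ev, wv, Nf, Fin.sum_univ_three, Prod.ext_iff]
    try (field_simp; try ring); try tauto

lemma Ev_star (μ : ℝ) (x : Fin 3 × Fin 3 × Fin 3) : star (Ev μ x) = Ev μ x := by
  unfold Ev; split_ifs <;> simp

lemma triple (μ : ℝ) (x y : Fin 3 × Fin 3 × Fin 3) :
    (onePmat3 μ * pOneMat3 μ * onePmat3 μ) x y =
    ∑ d : Fin 3, ∑ b : Fin 3, ∑ a : Fin 3,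
      Pmat3 μ (x.2.1, x.2.2) (a, b) * Pmat3 μ (x.1, a) (y.1, d) *
        Pmat3 μ (d, b) (y.2.1, y.2.2) := by
  simp [Matrix.mul_apply, onePmat3, pOneMat3, Fintype.sum_prod_type, ite_and,
    Finset.sum_ite_eq, Finset.sum_ite_eq', Finset.mul_sum, Finset.sum_mul]

noncomputable def Smat (μ : ℝ) : Matrix (Fin 3 × Fin 3 × Fin 3) (Fin 3 × Fin 3 × Fin 3) ℂ :=
  Matrix.of fun x y => ∑ d : Fin 3, ∑ b : Fin 3, ∑ a : Fin 3,
    Nf μ (x.2.1, x.2.2) (a, b) * Nf μ (x.1, a) (y.1, d) * Nf μ (d, b) (y.2.1, y.2.2)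

noncomputable def Rmat (μ : ℝ) : Matrix (Fin 3 × Fin 3 × Fin 3) (Fin 3 × Fin 3 × Fin 3) ℂ :=
  Matrix.of fun x y =>
    ((μ : ℂ) ^ 2 * (1 + (μ : ℂ) ^ 2 + (μ : ℂ) ^ 4)) *
      (if x.1 = y.1 then Nf μ x.2 y.2 else 0) +
    ((1 + (μ : ℂ) ^ 2) ^ 2 - (μ : ℂ) ^ 2) * (Ev μ x * Ev μ y)

@[simp] lemma Nf_00_00 (μ : ℝ) : Nf μ (0, 0) (0, 0) = 0 := by simp [Nf, wv] <;> ring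
@[simp] lemma Nf_00_01 (μ : ℝ) : Nf μ (0, 0) (0, 1) = 0 := by simp [Nf, wv] <;> ring
@[simp] lemma Nf_00_02 (μ : ℝ) : Nf μ (0, 0) (0, 2) = 0 := by simp [Nf, wv] <;> ring
@[simp] lemma Nf_00_10 (μ : ℝ) : Nf μ (0, 0) (1, 0) = 0 := by simp [Nf, wv] <;> ring
@[simp] lemma Nf_00_11 (μ : ℝ) : Nf μ (0, 0) (1, 1) = 0 := by simp [Nf, wv] <;> ring
@[simp] lemma Nf_00_12 (μ : ℝ) : Nf μ (0, 0) (1, 2) = 0 := by simp [Nf, wv] <;> ring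
@[simp] lemma Nf_00_20 (μ : ℝ) : Nf μ (0, 0) (2, 0) = 0 := by simp [Nf, wv] <;> ring
@[simp] lemma Nf_00_21 (μ : ℝ) : Nf μ (0, 0) (2, 1) = 0 := by simp [Nf, wv] <;> ring
@[simp] lemma Nf_00_22 (μ : ℝ) : Nf μ (0, 0) (2, 2) = 0 := by simp [Nf, wv] <;> ring
@[simp] lemma Nf_01_00 (μ : ℝ) : Nf μ (0, 1) (0, 0) = 0 := by simp [Nf, wv] <;> ring
@[simp] lemma Nf_01_01 (μ : ℝ) : Nf μ (0, 1) (0, 1) = 1 := by simp [Nf, wv] <;> ring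
@[simp] lemma Nf_01_02 (μ : ℝ) : Nf μ (0, 1) (0, 2) = 0 := by simp [Nf, wv] <;> ring
@[simp] lemma Nf_01_10 (μ : ℝ) : Nf μ (0, 1) (1, 0) = -(μ : ℂ) := by simp [Nf, wv] <;> ring
@[simp] lemma Nf_01_11 (μ : ℝ) : Nf μ (0, 1) (1, 1) = 0 := by simp [Nf, wv] <;> ring
@[simp] lemma Nf_01_12 (μ : ℝ) : Nf μ (0, 1) (1, 2) = 0 := by simp [Nf, wv] <;> ring
@[simp] lemma Nf_01_20 (μ : ℝ) : Nf μ (0, 1) (2, 0) = 0 := by simp [Nf, wv] <;> ring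
@[simp] lemma Nf_01_21 (μ : ℝ) : Nf μ (0, 1) (2, 1) = 0 := by simp [Nf, wv] <;> ring
@[simp] lemma Nf_01_22 (μ : ℝ) : Nf μ (0, 1) (2, 2) = 0 := by simp [Nf, wv] <;> ring
@[simp] lemma Nf_02_00 (μ : ℝ) : Nf μ (0, 2) (0, 0) = 0 := by simp [Nf, wv] <;> ring
@[simp] lemma Nf_02_01 (μ : ℝ) : Nf μ (0, 2) (0, 1) = 0 := by simp [Nf, wv] <;> ring
@[simp] lemma Nf_02_02 (μ : ℝ) : Nf μ (0, 2) (0, 2) = 1 := by simp [Nf, wv] <;> ring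
@[simp] lemma Nf_02_10 (μ : ℝ) : Nf μ (0, 2) (1, 0) = 0 := by simp [Nf, wv] <;> ring
@[simp] lemma Nf_02_11 (μ : ℝ) : Nf μ (0, 2) (1, 1) = 0 := by simp [Nf, wv] <;> ring
@[simp] lemma Nf_02_12 (μ : ℝ) : Nf μ (0, 2) (1, 2) = 0 := by simp [Nf, wv] <;> ring
@[simp] lemma Nf_02_20 (μ : ℝ) : Nf μ (0, 2) (2, 0) = -(μ : ℂ) := by simp [Nf, wv] <;> ring
@[simp] lemma Nf_02_21 (μ : ℝ) : Nf μ (0, 2) (2, 1) = 0 := by simp [Nf, wv] <;> ring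
@[simp] lemma Nf_02_22 (μ : ℝ) : Nf μ (0, 2) (2, 2) = 0 := by simp [Nf, wv] <;> ring
@[simp] lemma Nf_10_00 (μ : ℝ) : Nf μ (1, 0) (0, 0) = 0 := by simp [Nf, wv] <;> ring
@[simp] lemma Nf_10_01 (μ : ℝ) : Nf μ (1, 0) (0, 1) = -(μ : ℂ) := by simp [Nf, wv] <;> ring
@[simp] lemma Nf_10_02 (μ : ℝ) : Nf μ (1, 0) (0, 2) = 0 := by simp [Nf, wv] <;> ring
@[simp] lemma Nf_10_10 (μ : ℝ) : Nf μ (1, 0) (1, 0) = (μ : ℂ) ^ 2 := by simp [Nf, wv] <;> ring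
@[simp] lemma Nf_10_11 (μ : ℝ) : Nf μ (1, 0) (1, 1) = 0 := by simp [Nf, wv] <;> ring
@[simp] lemma Nf_10_12 (μ : ℝ) : Nf μ (1, 0) (1, 2) = 0 := by simp [Nf, wv] <;> ring
@[simp] lemma Nf_10_20 (μ : ℝ) : Nf μ (1, 0) (2, 0) = 0 := by simp [Nf, wv] <;> ring
@[simp] lemma Nf_10_21 (μ : ℝ) : Nf μ (1, 0) (2, 1) = 0 := by simp [Nf, wv] <;> ring
@[simp] lemma Nf_10_22 (μ : ℝ) : Nf μ (1, 0) (2, 2) = 0 := by simp [Nf, wv] <;> ring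
@[simp] lemma Nf_11_00 (μ : ℝ) : Nf μ (1, 1) (0, 0) = 0 := by simp [Nf, wv] <;> ring
@[simp] lemma Nf_11_01 (μ : ℝ) : Nf μ (1, 1) (0, 1) = 0 := by simp [Nf, wv] <;> ring
@[simp] lemma Nf_11_02 (μ : ℝ) : Nf μ (1, 1) (0, 2) = 0 := by simp [Nf, wv] <;> ring
@[simp] lemma Nf_11_10 (μ : ℝ) : Nf μ (1, 1) (1, 0) = 0 := by simp [Nf, wv] <;> ring
@[simp] lemma Nf_11_11 (μ : ℝ) : Nf μ (1, 1) (1, 1) = 0 := by simp [Nf, wv] <;> ring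
@[simp] lemma Nf_11_12 (μ : ℝ) : Nf μ (1, 1) (1, 2) = 0 := by simp [Nf, wv] <;> ring
@[simp] lemma Nf_11_20 (μ : ℝ) : Nf μ (1, 1) (2, 0) = 0 := by simp [Nf, wv] <;> ring
@[simp] lemma Nf_11_21 (μ : ℝ) : Nf μ (1, 1) (2, 1) = 0 := by simp [Nf, wv] <;> ring
@[simp] lemma Nf_11_22 (μ : ℝ) : Nf μ (1, 1) (2, 2) = 0 := by simp [Nf, wv] <;> ring
@[simp] lemma Nf_12_00 (μ : ℝ) : Nf μ (1, 2) (0, 0) = 0 := by simp [Nf, wv] <;> ring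
@[simp] lemma Nf_12_01 (μ : ℝ) : Nf μ (1, 2) (0, 1) = 0 := by simp [Nf, wv] <;> ring
@[simp] lemma Nf_12_02 (μ : ℝ) : Nf μ (1, 2) (0, 2) = 0 := by simp [Nf, wv] <;> ring
@[simp] lemma Nf_12_10 (μ : ℝ) : Nf μ (1, 2) (1, 0) = 0 := by simp [Nf, wv] <;> ring
@[simp] lemma Nf_12_11 (μ : ℝ) : Nf μ (1, 2) (1, 1) = 0 := by simp [Nf, wv] <;> ring
@[simp] lemma Nf_12_12 (μ : ℝ) : Nf μ (1, 2) (1, 2) = 1 := by simp [Nf, wv] <;> ring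
@[simp] lemma Nf_12_20 (μ : ℝ) : Nf μ (1, 2) (2, 0) = 0 := by simp [Nf, wv] <;> ring
@[simp] lemma Nf_12_21 (μ : ℝ) : Nf μ (1, 2) (2, 1) = -(μ : ℂ) := by simp [Nf, wv] <;> ring
@[simp] lemma Nf_12_22 (μ : ℝ) : Nf μ (1, 2) (2, 2) = 0 := by simp [Nf, wv] <;> ring
@[simp] lemma Nf_20_00 (μ : ℝ) : Nf μ (2, 0) (0, 0) = 0 := by simp [Nf, wv] <;> ring
@[simp] lemma Nf_20_01 (μ : ℝ) : Nf μ (2, 0) (0, 1) = 0 := by simp [Nf, wv] <;> ring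
@[simp] lemma Nf_20_02 (μ : ℝ) : Nf μ (2, 0) (0, 2) = -(μ : ℂ) := by simp [Nf, wv] <;> ring
@[simp] lemma Nf_20_10 (μ : ℝ) : Nf μ (2, 0) (1, 0) = 0 := by simp [Nf, wv] <;> ring
@[simp] lemma Nf_20_11 (μ : ℝ) : Nf μ (2, 0) (1, 1) = 0 := by simp [Nf, wv] <;> ring
@[simp] lemma Nf_20_12 (μ : ℝ) : Nf μ (2, 0) (1, 2) = 0 := by simp [Nf, wv] <;> ring
@[simp] lemma Nf_20_20 (μ : ℝ) : Nf μ (2, 0) (2, 0) = (μ : ℂ) ^ 2 := by simp [Nf, wv] <;> ring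
@[simp] lemma Nf_20_21 (μ : ℝ) : Nf μ (2, 0) (2, 1) = 0 := by simp [Nf, wv] <;> ring
@[simp] lemma Nf_20_22 (μ : ℝ) : Nf μ (2, 0) (2, 2) = 0 := by simp [Nf, wv] <;> ring
@[simp] lemma Nf_21_00 (μ : ℝ) : Nf μ (2, 1) (0, 0) = 0 := by simp [Nf, wv] <;> ring
@[simp] lemma Nf_21_01 (μ : ℝ) : Nf μ (2, 1) (0, 1) = 0 := by simp [Nf, wv] <;> ring
@[simp] lemma Nf_21_02 (μ : ℝ) : Nf μ (2, 1) (0, 2) = 0 := by simp [Nf, wv] <;> ring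
@[simp] lemma Nf_21_10 (μ : ℝ) : Nf μ (2, 1) (1, 0) = 0 := by simp [Nf, wv] <;> ring
@[simp] lemma Nf_21_11 (μ : ℝ) : Nf μ (2, 1) (1, 1) = 0 := by simp [Nf, wv] <;> ring
@[simp] lemma Nf_21_12 (μ : ℝ) : Nf μ (2, 1) (1, 2) = -(μ : ℂ) := by simp [Nf, wv] <;> ring
@[simp] lemma Nf_21_20 (μ : ℝ) : Nf μ (2, 1) (2, 0) = 0 := by simp [Nf, wv] <;> ring
@[simp] lemma Nf_21_21 (μ : ℝ) : Nf μ (2, 1) (2, 1) = (μ : ℂ) ^ 2 := by simp [Nf, wv] <;> ring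
@[simp] lemma Nf_21_22 (μ : ℝ) : Nf μ (2, 1) (2, 2) = 0 := by simp [Nf, wv] <;> ring
@[simp] lemma Nf_22_00 (μ : ℝ) : Nf μ (2, 2) (0, 0) = 0 := by simp [Nf, wv] <;> ring
@[simp] lemma Nf_22_01 (μ : ℝ) : Nf μ (2, 2) (0, 1) = 0 := by simp [Nf, wv] <;> ring
@[simp] lemma Nf_22_02 (μ : ℝ) : Nf μ (2, 2) (0, 2) = 0 := by simp [Nf, wv] <;> ring
@[simp] lemma Nf_22_10 (μ : ℝ) : Nf μ (2, 2) (1, 0) = 0 := by simp [Nf, wv] <;> ring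
@[simp] lemma Nf_22_11 (μ : ℝ) : Nf μ (2, 2) (1, 1) = 0 := by simp [Nf, wv] <;> ring
@[simp] lemma Nf_22_12 (μ : ℝ) : Nf μ (2, 2) (1, 2) = 0 := by simp [Nf, wv] <;> ring
@[simp] lemma Nf_22_20 (μ : ℝ) : Nf μ (2, 2) (2, 0) = 0 := by simp [Nf, wv] <;> ring
@[simp] lemma Nf_22_21 (μ : ℝ) : Nf μ (2, 2) (2, 1) = 0 := by simp [Nf, wv] <;> ring
@[simp] lemma Nf_22_22 (μ : ℝ) : Nf μ (2, 2) (2, 2) = 0 := by simp [Nf, wv] <;> ring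
@[simp] lemma Ev_000 (μ : ℝ) : Ev μ (0, 0, 0) = 0 := by simp [Ev, Prod.ext_iff] <;> ring
@[simp] lemma Ev_001 (μ : ℝ) : Ev μ (0, 0, 1) = 0 := by simp [Ev, Prod.ext_iff] <;> ring
@[simp] lemma Ev_002 (μ : ℝ) : Ev μ (0, 0, 2) = 0 := by simp [Ev, Prod.ext_iff] <;> ring
@[simp] lemma Ev_010 (μ : ℝ) : Ev μ (0, 1, 0) = 0 := by simp [Ev, Prod.ext_iff] <;> ring
@[simp] lemma Ev_011 (μ : ℝ) : Ev μ (0, 1, 1) = 0 := by simp [Ev, Prod.ext_iff] <;> ring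
@[simp] lemma Ev_012 (μ : ℝ) : Ev μ (0, 1, 2) = 1 := by simp [Ev, Prod.ext_iff] <;> ring
@[simp] lemma Ev_020 (μ : ℝ) : Ev μ (0, 2, 0) = 0 := by simp [Ev, Prod.ext_iff] <;> ring
@[simp] lemma Ev_021 (μ : ℝ) : Ev μ (0, 2, 1) = -(μ : ℂ) := by simp [Ev, Prod.ext_iff] <;> ring
@[simp] lemma Ev_022 (μ : ℝ) : Ev μ (0, 2, 2) = 0 := by simp [Ev, Prod.ext_iff] <;> ring
@[simp] lemma Ev_100 (μ : ℝ) : Ev μ (1, 0, 0) = 0 := by simp [Ev, Prod.ext_iff] <;> ring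
@[simp] lemma Ev_101 (μ : ℝ) : Ev μ (1, 0, 1) = 0 := by simp [Ev, Prod.ext_iff] <;> ring
@[simp] lemma Ev_102 (μ : ℝ) : Ev μ (1, 0, 2) = -(μ : ℂ) := by simp [Ev, Prod.ext_iff] <;> ring
@[simp] lemma Ev_110 (μ : ℝ) : Ev μ (1, 1, 0) = 0 := by simp [Ev, Prod.ext_iff] <;> ring
@[simp] lemma Ev_111 (μ : ℝ) : Ev μ (1, 1, 1) = 0 := by simp [Ev, Prod.ext_iff] <;> ring
@[simp] lemma Ev_112 (μ : ℝ) : Ev μ (1, 1, 2) = 0 := by simp [Ev, Prod.ext_iff] <;> ring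
@[simp] lemma Ev_120 (μ : ℝ) : Ev μ (1, 2, 0) = (μ : ℂ) ^ 2 := by simp [Ev, Prod.ext_iff] <;> ring
@[simp] lemma Ev_121 (μ : ℝ) : Ev μ (1, 2, 1) = 0 := by simp [Ev, Prod.ext_iff] <;> ring
@[simp] lemma Ev_122 (μ : ℝ) : Ev μ (1, 2, 2) = 0 := by simp [Ev, Prod.ext_iff] <;> ring
@[simp] lemma Ev_200 (μ : ℝ) : Ev μ (2, 0, 0) = 0 := by simp [Ev, Prod.ext_iff] <;> ring
@[simp] lemma Ev_201 (μ : ℝ) : Ev μ (2, 0, 1) = (μ : ℂ) ^ 2 := by simp [Ev, Prod.ext_iff] <;> ring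
@[simp] lemma Ev_202 (μ : ℝ) : Ev μ (2, 0, 2) = 0 := by simp [Ev, Prod.ext_iff] <;> ring
@[simp] lemma Ev_210 (μ : ℝ) : Ev μ (2, 1, 0) = -(μ : ℂ) ^ 3 := by simp [Ev, Prod.ext_iff] <;> ring
@[simp] lemma Ev_211 (μ : ℝ) : Ev μ (2, 1, 1) = 0 := by simp [Ev, Prod.ext_iff] <;> ring
@[simp] lemma Ev_212 (μ : ℝ) : Ev μ (2, 1, 2) = 0 := by simp [Ev, Prod.ext_iff] <;> ring
@[simp] lemma Ev_220 (μ : ℝ) : Ev μ (2, 2, 0) = 0 := by simp [Ev, Prod.ext_iff] <;> ring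
@[simp] lemma Ev_221 (μ : ℝ) : Ev μ (2, 2, 1) = 0 := by simp [Ev, Prod.ext_iff] <;> ring
@[simp] lemma Ev_222 (μ : ℝ) : Ev μ (2, 2, 2) = 0 := by simp [Ev, Prod.ext_iff] <;> ring


lemma L1 (μ : ℝ) (hμ0 : μ ≠ 0) :
    ((1 + (μ : ℂ) ^ 2) ^ 3 * (1 + (μ : ℂ) ^ 2 + (μ : ℂ) ^ 4)) •
      (onePmat3 μ * pOneMat3 μ * onePmat3 μ)
    = (1 + (μ : ℂ) ^ 2 + (μ : ℂ) ^ 4) • Smat μ := by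
  have h2 : (1 : ℂ) + (μ : ℂ) ^ 2 ≠ 0 := by
    have : ((1 + μ ^ 2 : ℝ) : ℂ) ≠ 0 := by
      exact_mod_cast (by positivity : (1 + μ ^ 2 : ℝ) ≠ 0)
    push_cast at this; exact this
  ext x y
  rw [Matrix.smul_apply, Matrix.smul_apply, triple, Smat]
  simp only [Pmat3_eq μ hμ0, Matrix.of_apply, smul_eq_mul, Finset.mul_sum]
  refine Finset.sum_congr rfl fun d _ => Finset.sum_congr rfl fun b _ =>
    Finset.sum_congr rfl fun a _ => ?_
  field_simp

lemma R1 (μ : ℝ) (hμ0 : μ ≠ 0) :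
    ((1 + (μ : ℂ) ^ 2) ^ 3 * (1 + (μ : ℂ) ^ 2 + (μ : ℂ) ^ 4)) •
      (((((μ : ℂ) + (μ : ℂ)⁻¹) ^ 2)⁻¹) • (onePmat3 μ - Lmat3 μ) + Lmat3 μ)
    = Rmat μ := by
  have hc : (μ : ℂ) ≠ 0 := by exact_mod_cast hμ0
  have h2 : (1 : ℂ) + (μ : ℂ) ^ 2 ≠ 0 := by
    have : ((1 + μ ^ 2 : ℝ) : ℂ) ≠ 0 := by
      exact_mod_cast (by positivity : (1 + μ ^ 2 : ℝ) ≠ 0)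
    push_cast at this; exact this
  have h4 : (1 : ℂ) + (μ : ℂ) ^ 2 + (μ : ℂ) ^ 4 ≠ 0 := by
    have : ((1 + μ ^ 2 + μ ^ 4 : ℝ) : ℂ) ≠ 0 := by
      exact_mod_cast (by positivity : (1 + μ ^ 2 + μ ^ 4 : ℝ) ≠ 0)
    push_cast at this; exact this
  have e : (μ : ℂ) + (μ : ℂ)⁻¹ = (1 + (μ : ℂ) ^ 2) * (μ : ℂ)⁻¹ := by
    field_simp; ring
  have h3 : (μ : ℂ) + (μ : ℂ)⁻¹ ≠ 0 := by
    rw [e]; exact mul_ne_zero h2 (inv_ne_zero hc)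
  have e2 : ((((μ : ℂ) + (μ : ℂ)⁻¹) ^ 2)⁻¹) = (μ : ℂ) ^ 2 * (((1 + (μ : ℂ) ^ 2) ^ 2)⁻¹) := by
    rw [e, mul_pow, inv_pow, mul_inv, inv_inv]; ring
  have s1 : ((1 + (μ : ℂ) ^ 2) ^ 3 * (1 + (μ : ℂ) ^ 2 + (μ : ℂ) ^ 4)) *
      ((((μ : ℂ) + (μ : ℂ)⁻¹) ^ 2)⁻¹ * (1 + (μ : ℂ) ^ 2)⁻¹) =
      (μ : ℂ) ^ 2 * (1 + (μ : ℂ) ^ 2 + (μ : ℂ) ^ 4) := by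
    rw [e2]
    generalize (1 : ℂ) + (μ : ℂ) ^ 2 = u at h2 ⊢
    field_simp
  have s2 : ((1 + (μ : ℂ) ^ 2) ^ 3 * (1 + (μ : ℂ) ^ 2 + (μ : ℂ) ^ 4)) *
      ((((μ : ℂ) + (μ : ℂ)⁻¹) ^ 2)⁻¹ *
        ((1 + (μ : ℂ) ^ 2) * (1 + (μ : ℂ) ^ 2 + (μ : ℂ) ^ 4))⁻¹) = (μ : ℂ) ^ 2 := by
    rw [e2]
    generalize (1 : ℂ) + (μ : ℂ) ^ 2 = u at h2 h4 ⊢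
    field_simp
  have s3 : ((1 + (μ : ℂ) ^ 2) ^ 3 * (1 + (μ : ℂ) ^ 2 + (μ : ℂ) ^ 4)) *
      ((1 + (μ : ℂ) ^ 2) * (1 + (μ : ℂ) ^ 2 + (μ : ℂ) ^ 4))⁻¹ = (1 + (μ : ℂ) ^ 2) ^ 2 := by
    field_simp
  ext x y
  simp only [Matrix.smul_apply, Matrix.add_apply, Matrix.sub_apply, Matrix.of_apply,
    Pmat3_eq μ hμ0, onePmat3, Lmat3, Rmat, Matrix.vecMulVec_apply, Pi.star_apply,
    Ev_star, smul_eq_mul]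
  split_ifs with h
  · linear_combination (Nf μ x.2 y.2) * s1 - (Ev μ x * Ev μ y) * s2 + (Ev μ x * Ev μ y) * s3
  · linear_combination - (Ev μ x * Ev μ y) * s2 + (Ev μ x * Ev μ y) * s3

set_option maxHeartbeats 4000000 in
lemma key (μ : ℝ) : (1 + (μ : ℂ) ^ 2 + (μ : ℂ) ^ 4) • Smat μ = Rmat μ := by
  ext ⟨x1, x2, x3⟩ ⟨y1, y2, y3⟩
  rw [Matrix.smul_apply, Smat, Rmat]
  rcases fin3_cases x1 with rfl|rfl|rfl <;> rcases fin3_cases x2 with rfl|rfl|rfl <;>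
  rcases fin3_cases x3 with rfl|rfl|rfl <;> rcases fin3_cases y1 with rfl|rfl|rfl <;>
  rcases fin3_cases y2 with rfl|rfl|rfl <;> rcases fin3_cases y3 with rfl|rfl|rfl <;>
  · simp only [Matrix.of_apply, Fin.sum_univ_three, Fin.reduceEq, reduceIte,
      smul_eq_mul, Nf_00_00, Nf_00_01, Nf_00_02, Nf_00_10, Nf_00_11, Nf_00_12, Nf_00_20, Nf_00_21, Nf_00_22, Nf_01_00, Nf_01_01, Nf_01_02, Nf_01_10, Nf_01_11, Nf_01_12, Nf_01_20, Nf_01_21, Nf_01_22, Nf_02_00, Nf_02_01, Nf_02_02, Nf_02_10, Nf_02_11, Nf_02_12, Nf_02_20, Nf_02_21, Nf_02_22, Nf_10_00, Nf_10_01, Nf_10_02, Nf_10_10, Nf_10_11, Nf_10_12, Nf_10_20, Nf_10_21, Nf_10_22, Nf_11_00, Nf_11_01, Nf_11_02, Nf_11_10, Nf_11_11, Nf_11_12, Nf_11_20, Nf_11_21, Nf_11_22, Nf_12_00, Nf_12_01, Nf_12_02, Nf_12_10, Nf_12_11, Nf_12_12, Nf_12_20, Nf_12_21, Nf_12_22,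 Nf_20_00, Nf_20_01, Nf_20_02, Nf_20_10, Nf_20_11, Nf_20_12, Nf_20_20, Nf_20_21, Nf_20_22, Nf_21_00, Nf_21_01, Nf_21_02, Nf_21_10, Nf_21_11, Nf_21_12, Nf_21_20, Nf_21_21, Nf_21_22, Nf_22_00, Nf_22_01, Nf_22_02, Nf_22_10, Nf_22_11, Nf_22_12, Nf_22_20, Nf_22_21, Nf_22_22, Ev_000, Ev_001, Ev_002, Ev_010, Ev_011, Ev_012, Ev_020, Ev_021, Ev_022, Ev_100, Ev_101, Ev_102, Ev_110, Ev_111, Ev_112, Ev_120, Ev_121, Ev_122, Ev_200, Ev_201, Ev_202, Ev_210, Ev_211, Ev_212, Ev_220, Ev_221, Ev_222]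
    ring

/-- `(1 ⊗ P)(P ⊗ 1)(1 ⊗ P) = (μ + μ⁻¹)⁻²((1 ⊗ P) − L) + L` as operators on `(ℂ³)^{⊗3}`. -/
theorem oneP_pOne_oneP_su3 (μ : ℝ) (hμ1 : -1 < μ) (hμ2 : μ < 1) (hμ0 : μ ≠ 0) :
    onePmat3 μ * pOneMat3 μ * onePmat3 μ =
      ((((μ : ℂ) + (μ : ℂ)⁻¹) ^ 2)⁻¹) • (onePmat3 μ - Lmat3 μ) + Lmat3 μ := by
  have h2 : (1 : ℂ) + (μ : ℂ) ^ 2 ≠ 0 := by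
    have : ((1 + μ ^ 2 : ℝ) : ℂ) ≠ 0 := by
      exact_mod_cast (by positivity : (1 + μ ^ 2 : ℝ) ≠ 0)
    push_cast at this; exact this
  have h4 : (1 : ℂ) + (μ : ℂ) ^ 2 + (μ : ℂ) ^ 4 ≠ 0 := by
    have : ((1 + μ ^ 2 + μ ^ 4 : ℝ) : ℂ) ≠ 0 := by
      exact_mod_cast (by positivity : (1 + μ ^ 2 + μ ^ 4 : ℝ) ≠ 0)
    push_cast at this; exact this
  have hD : (1 + (μ : ℂ) ^ 2) ^ 3 * (1 + (μ : ℂ) ^ 2 + (μ : ℂ) ^ 4) ≠ 0 :=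
    mul_ne_zero (pow_ne_zero _ h2) h4
  exact smul_right_injective
    (Matrix (Fin 3 × Fin 3 × Fin 3) (Fin 3 × Fin 3 × Fin 3) ℂ) hD
    ((L1 μ hμ0).trans ((key μ).trans (R1 μ hμ0).symm))
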